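/- If σ is a right 2-cocycle on a bialgebra B in a braided monoidal category, then the coproduct Δ of B, viewed as a morphism Δ: B_σ → B ⊗ B_σ, makes the cocycle twist B_σ a left B-comodule algebra: Δ is an algebra map from (B, m_σ) to the algebra B ⊗ B_σ (with braided tensor product multiplication using m on the first factor and m_σ on the second). -/

import Mathlib

open CategoryTheory MonoidalCategory

private lemma aux_coh {𝒞 : Type*} [Category 𝒞] [MonoidalCategory 𝒞]
    {X Y : 𝒞} (m : X ⟶ Y) (σ : X ⟶ 𝟙_ 𝒞) :
    ((m ⊗ₘ m) ⊗ₘ σ) ≫ (ρ_ (Y ⊗ Y)).hom =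
      (α_ X X X).hom ≫ (m ⊗ₘ ((m ⊗ₘ σ) ≫ (ρ_ Y).hom)) := by
  symm
  calc (α_ X X X).hom ≫ (m ⊗ₘ ((m ⊗ₘ σ) ≫ (ρ_ Y).hom))
      = (α_ X X X).hom ≫ (m ⊗ₘ (m ⊗ₘ σ)) ≫ (Y ◁ (ρ_ Y).hom) := by
        rw [← id_tensorHom, tensorHom_comp_tensorHom, Category.comp_id]
    _ = ((m ⊗ₘ m) ⊗ₘ σ) ≫ (α_ Y Y (𝟙_ 𝒞)).hom ≫ (Y ◁ (ρ_ Y).hom) := by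
        rw [associator_naturality_assoc]
    _ = ((m ⊗ₘ m) ⊗ₘ σ) ≫ (ρ_ (Y ⊗ Y)).hom := by
        rw [MonoidalCategory.whiskerLeft_rightUnitor, Iso.hom_inv_id_assoc]

private lemma aux_alg {𝒞 : Type*} [Category 𝒞] [MonoidalCategory 𝒞]
    {Y : 𝒞} (d : Y ⊗ Y ⟶ (Y ⊗ Y) ⊗ (Y ⊗ Y))
    (hco : d ≫ ((Y ⊗ Y) ◁ d) = d ≫ (d ▷ (Y ⊗ Y)) ≫ (α_ (Y ⊗ Y) (Y ⊗ Y) (Y ⊗ Y)).hom)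
    (m : Y ⊗ Y ⟶ Y) (Δ : Y ⟶ Y ⊗ Y) (σ : Y ⊗ Y ⟶ 𝟙_ 𝒞)
    (hbialg : m ≫ Δ = d ≫ (m ⊗ₘ m)) :
    (d ≫ (m ⊗ₘ σ) ≫ (ρ_ Y).hom) ≫ Δ = d ≫ (m ⊗ₘ (d ≫ (m ⊗ₘ σ) ≫ (ρ_ Y).hom)) := by
  calc (d ≫ (m ⊗ₘ σ) ≫ (ρ_ Y).hom) ≫ Δ
      = d ≫ (m ⊗ₘ σ) ≫ (Δ ▷ 𝟙_ 𝒞) ≫ (ρ_ (Y ⊗ Y)).hom := by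
        have h : (ρ_ Y).hom ≫ Δ = (Δ ▷ 𝟙_ 𝒞) ≫ (ρ_ (Y ⊗ Y)).hom :=
          (rightUnitor_naturality Δ).symm
        rw [Category.assoc, Category.assoc, h]
    _ = d ≫ ((m ≫ Δ) ⊗ₘ σ) ≫ (ρ_ (Y ⊗ Y)).hom := by
        rw [← tensorHom_id, tensorHom_comp_tensorHom_assoc, Category.comp_id]
    _ = d ≫ ((d ≫ (m ⊗ₘ m)) ⊗ₘ σ) ≫ (ρ_ (Y ⊗ Y)).hom := by rw [hbialg]
    _ = d ≫ (d ▷ (Y ⊗ Y)) ≫ ((m ⊗ₘ m) ⊗ₘ σ) ≫ (ρ_ (Y ⊗ Y)).hom := by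
        rw [tensorHom_def (d ≫ (m ⊗ₘ m)) σ, comp_whiskerRight,
          tensorHom_def (m ⊗ₘ m) σ]
        simp only [Category.assoc]
    _ = d ≫ (d ▷ (Y ⊗ Y)) ≫ (α_ (Y ⊗ Y) (Y ⊗ Y) (Y ⊗ Y)).hom ≫ (m ⊗ₘ ((m ⊗ₘ σ) ≫ (ρ_ Y).hom)) := by
        rw [aux_coh]
    _ = d ≫ ((Y ⊗ Y) ◁ d) ≫ (m ⊗ₘ ((m ⊗ₘ σ) ≫ (ρ_ Y).hom)) := by
        rw [reassoc_of% hco]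
    _ = d ≫ (m ⊗ₘ (d ≫ (m ⊗ₘ σ) ≫ (ρ_ Y).hom)) := by
        rw [← id_tensorHom, tensorHom_comp_tensorHom, Category.id_comp]

/-- If `σ` is a (normalized) right 2-cocycle on a bialgebra `B` in a
braided monoidal category, then the coproduct `Δ : B_σ ⟶ B ⊗ B_σ` makes the cocycle
twist `B_σ` a left `B`-comodule algebra: `Δ` is multiplicative from `(B, m_σ)` to
the braided tensor product algebra `B ⊗ B_σ` (with `m` on the first factor and
`m_σ` on the second), and preserves the unit. -/
theorem stmt_11 {𝒞 : Type*} [Category 𝒞] [MonoidalCategory 𝒞] [BraidedCategory 𝒞]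
    (B : 𝒞) (m : B ⊗ B ⟶ B) (one : 𝟙_ 𝒞 ⟶ B)
    (Δ : B ⟶ B ⊗ B) (ε : B ⟶ 𝟙_ 𝒞)
    -- bialgebra axioms
    (hassoc : (m ▷ B) ≫ m = (α_ B B B).hom ≫ (B ◁ m) ≫ m)
    (hunitl : (one ▷ B) ≫ m = (λ_ B).hom)
    (hunitr : (B ◁ one) ≫ m = (ρ_ B).hom)
    (hcoassoc : Δ ≫ (Δ ▷ B) ≫ (α_ B B B).hom = Δ ≫ (B ◁ Δ))
    (hcounitl : Δ ≫ (ε ▷ B) = (λ_ B).inv)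
    (hcounitr : Δ ≫ (B ◁ ε) = (ρ_ B).inv)
    (hbialg : m ≫ Δ = (Δ ⊗ₘ Δ) ≫ tensorμ B B B B ≫ (m ⊗ₘ m))
    (hone : one ≫ Δ = (λ_ (𝟙_ 𝒞)).inv ≫ (one ⊗ₘ one))
    (hcounit_mul : m ≫ ε = (ε ⊗ₘ ε) ≫ (λ_ (𝟙_ 𝒞)).hom)
    (hone_counit : one ≫ ε = 𝟙 (𝟙_ 𝒞))
    (σ : B ⊗ B ⟶ 𝟙_ 𝒞)
    -- `σ` is a (normalized, braided) right 2-cocycle: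
    (hcocycle : (((Δ ⊗ₘ Δ) ≫ tensorμ B B B B ≫ (m ▷ (B ⊗ B))) ▷ B) ≫
        (α_ B (B ⊗ B) B).hom ≫ (B ◁ (β_ (B ⊗ B) B).hom) ≫
        (α_ B B (B ⊗ B)).inv ≫ (σ ⊗ₘ σ) ≫ (λ_ (𝟙_ 𝒞)).hom =
      (α_ B B B).hom ≫
        (B ◁ ((Δ ⊗ₘ Δ) ≫ tensorμ B B B B ≫ (m ▷ (B ⊗ B)))) ≫
        (α_ B B (B ⊗ B)).inv ≫ (σ ⊗ₘ σ) ≫ (λ_ (𝟙_ 𝒞)).hom)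
    (hnorml : (one ▷ B) ≫ σ = (λ_ B).hom ≫ ε)
    (hnormr : (B ◁ one) ≫ σ = (ρ_ B).hom ≫ ε)
    -- the twisted multiplication `m_σ`
    (mσ : B ⊗ B ⟶ B)
    (hmσ : mσ = (Δ ⊗ₘ Δ) ≫ tensorμ B B B B ≫ (m ⊗ₘ σ) ≫ (ρ_ B).hom) :
    -- `Δ : B_σ ⟶ B ⊗ B_σ` is an algebra morphism, i.e. `B_σ` is a left
    -- `B`-comodule algebra:
    mσ ≫ Δ = (Δ ⊗ₘ Δ) ≫ tensorμ B B B B ≫ (m ⊗ₘ mσ) ∧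
    one ≫ Δ = (λ_ (𝟙_ 𝒞)).inv ≫ (one ⊗ₘ one) := by
  refine ⟨?_, hone⟩
  letI M : ComonObj B :=
    { counit := ε, comul := Δ,
      counit_comul := hcounitl, comul_counit := hcounitr,
      comul_assoc := hcoassoc.symm }
  have hco : ((Δ ⊗ₘ Δ) ≫ tensorμ B B B B) ≫ ((B ⊗ B) ◁ ((Δ ⊗ₘ Δ) ≫ tensorμ B B B B)) =
      ((Δ ⊗ₘ Δ) ≫ tensorμ B B B B) ≫ (((Δ ⊗ₘ Δ) ≫ tensorμ B B B B) ▷ (B ⊗ B)) ≫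
        (α_ (B ⊗ B) (B ⊗ B) (B ⊗ B)).hom := by
    have := ComonObj.comul_assoc (B ⊗ B)
    rwa [Comon.tensorObj_comul (C := 𝒞) B B] at this
  have key := aux_alg ((Δ ⊗ₘ Δ) ≫ tensorμ B B B B) hco m Δ σ
    (by rw [hbialg, Category.assoc])
  rw [hmσ]
  simp only [Category.assoc] at key ⊢
  exact key
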